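/- Let α > 0 and set p_α = 3 if α ≥ 1 and p_α = 6/(3-α) if 0 < α < 1. For the Aronsson function w, the function |D(|Dw|^α)| = (α/2)|Dw|^{α-2}|D(|Dw|²)| belongs to L^p of the unit square for every 1 ≤ p < p_α, but not for p = p_α (when α < 3). -/

import Mathlib

open MeasureTheory Real Set

noncomputable def ar (α u v : ℝ) : ℝ :=
  (α / 2) * ((4 / 3) * Real.sqrt (u ^ ((2:ℝ)/3) + v ^ ((2:ℝ)/3))) ^ (α - 2)
    * ((16 / 27) * Real.sqrt (u ^ (-(2:ℝ)/3) + v ^ (-(2:ℝ)/3)))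

lemma sandwich_g {u v : ℝ} (hu : 0 < u) (hv : 0 < v) :
    (max u v) ^ ((1:ℝ)/3) ≤ Real.sqrt (u ^ ((2:ℝ)/3) + v ^ ((2:ℝ)/3)) ∧
    Real.sqrt (u ^ ((2:ℝ)/3) + v ^ ((2:ℝ)/3)) ≤ Real.sqrt 2 * (max u v) ^ ((1:ℝ)/3) := by
  have hM : 0 < max u v := lt_max_of_lt_left hu
  have hMr : (max u v) ^ ((1:ℝ)/3) = Real.sqrt ((max u v) ^ ((2:ℝ)/3)) := by
    rw [Real.sqrt_eq_rpow, ← Real.rpow_mul hM.le]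
    norm_num
  constructor
  · rw [hMr]
    apply Real.sqrt_le_sqrt
    rcases max_cases u v with ⟨h1, h2⟩ | ⟨h1, h2⟩ <;> rw [h1] <;>
      [exact le_add_of_nonneg_right (Real.rpow_nonneg hv.le _);
       exact le_add_of_nonneg_left (Real.rpow_nonneg hu.le _)]
  · rw [hMr, ← Real.sqrt_mul (by norm_num : (0:ℝ) ≤ 2)]
    apply Real.sqrt_le_sqrt
    have h1 : u ^ ((2:ℝ)/3) ≤ (max u v) ^ ((2:ℝ)/3) :=
      Real.rpow_le_rpow hu.le (le_max_left u v) (by norm_num)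
    have h2 : v ^ ((2:ℝ)/3) ≤ (max u v) ^ ((2:ℝ)/3) :=
      Real.rpow_le_rpow hv.le (le_max_right u v) (by norm_num)
    linarith

lemma sandwich_h {u v : ℝ} (hu : 0 < u) (hv : 0 < v) :
    (min u v) ^ (-(1:ℝ)/3) ≤ Real.sqrt (u ^ (-(2:ℝ)/3) + v ^ (-(2:ℝ)/3)) ∧
    Real.sqrt (u ^ (-(2:ℝ)/3) + v ^ (-(2:ℝ)/3)) ≤ Real.sqrt 2 * (min u v) ^ (-(1:ℝ)/3) := by
  have hm : 0 < min u v := lt_min hu hv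
  have hmr : (min u v) ^ (-(1:ℝ)/3) = Real.sqrt ((min u v) ^ (-(2:ℝ)/3)) := by
    rw [Real.sqrt_eq_rpow, ← Real.rpow_mul hm.le]
    norm_num
  constructor
  · rw [hmr]
    apply Real.sqrt_le_sqrt
    rcases min_cases u v with ⟨h1, h2⟩ | ⟨h1, h2⟩ <;> rw [h1] <;>
      [exact le_add_of_nonneg_right (Real.rpow_nonneg hv.le _);
       exact le_add_of_nonneg_left (Real.rpow_nonneg hu.le _)]
  · rw [hmr, ← Real.sqrt_mul (by norm_num : (0:ℝ) ≤ 2)]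
    apply Real.sqrt_le_sqrt
    have h1 : u ^ (-(2:ℝ)/3) ≤ (min u v) ^ (-(2:ℝ)/3) :=
      Real.rpow_le_rpow_of_nonpos hm (min_le_left u v) (by norm_num)
    have h2 : v ^ (-(2:ℝ)/3) ≤ (min u v) ^ (-(2:ℝ)/3) :=
      Real.rpow_le_rpow_of_nonpos hm (min_le_right u v) (by norm_num)
    linarith

lemma rpow_bracket {c₁ c₂ t b e : ℝ} (h₁ : 0 < c₁) (h₂ : 0 < c₂) (ht : 0 < t)
    (hb₁ : c₁ * t ≤ b) (hb₂ : b ≤ c₂ * t) :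
    min (c₁ ^ e) (c₂ ^ e) * t ^ e ≤ b ^ e ∧ b ^ e ≤ max (c₁ ^ e) (c₂ ^ e) * t ^ e := by
  have hb : 0 < b := lt_of_lt_of_le (by positivity) hb₁
  rcases le_total 0 e with he | he
  · constructor
    · calc min (c₁ ^ e) (c₂ ^ e) * t ^ e ≤ c₁ ^ e * t ^ e := by
            gcongr
            exact min_le_left _ _
        _ = (c₁ * t) ^ e := (Real.mul_rpow h₁.le ht.le).symm
        _ ≤ b ^ e := Real.rpow_le_rpow (by positivity) hb₁ he
    · calc b ^ e ≤ (c₂ * t) ^ e := Real.rpow_le_rpow hb.le hb₂ he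
        _ = c₂ ^ e * t ^ e := Real.mul_rpow h₂.le ht.le
        _ ≤ max (c₁ ^ e) (c₂ ^ e) * t ^ e := by
            gcongr
            exact le_max_right _ _
  · constructor
    · calc min (c₁ ^ e) (c₂ ^ e) * t ^ e ≤ c₂ ^ e * t ^ e := by
            gcongr
            exact min_le_right _ _
        _ = (c₂ * t) ^ e := (Real.mul_rpow h₂.le ht.le).symm
        _ ≤ b ^ e := Real.rpow_le_rpow_of_nonpos hb hb₂ he
    · calc b ^ e ≤ (c₁ * t) ^ e := Real.rpow_le_rpow_of_nonpos (by positivity) hb₁ he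
        _ = c₁ ^ e * t ^ e := Real.mul_rpow h₁.le ht.le
        _ ≤ max (c₁ ^ e) (c₂ ^ e) * t ^ e := by
            gcongr
            exact le_max_left _ _

lemma ar_bounds (α : ℝ) (hα : 0 < α) : ∃ k K : ℝ, 0 < k ∧ 0 < K ∧ ∀ u v : ℝ, 0 < u → 0 < v →
    k * ((max u v) ^ ((α-2)/3) * (min u v) ^ (-(1:ℝ)/3)) ≤ ar α u v ∧
    ar α u v ≤ K * ((max u v) ^ ((α-2)/3) * (min u v) ^ (-(1:ℝ)/3)) := by
  set c₁ : ℝ := 4/3 with hc₁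
  set c₂ : ℝ := 4/3 * Real.sqrt 2 with hc₂
  have h₁ : 0 < c₁ := by norm_num
  have h₂ : 0 < c₂ := by positivity
  refine ⟨(α/2) * min (c₁ ^ (α-2)) (c₂ ^ (α-2)) * (16/27),
         (α/2) * max (c₁ ^ (α-2)) (c₂ ^ (α-2)) * (16/27) * Real.sqrt 2, ?_, ?_, ?_⟩
  · have := Real.rpow_pos_of_pos h₁ (α-2); have := Real.rpow_pos_of_pos h₂ (α-2)
    have : 0 < min (c₁ ^ (α-2)) (c₂ ^ (α-2)) := lt_min ‹_› ‹_›
    positivity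
  · have := Real.rpow_pos_of_pos h₁ (α-2)
    have : 0 < max (c₁ ^ (α-2)) (c₂ ^ (α-2)) := lt_max_of_lt_left ‹_›
    positivity
  intro u v hu hv
  obtain ⟨g1, g2⟩ := sandwich_g hu hv
  obtain ⟨hh1, hh2⟩ := sandwich_h hu hv
  have hM : 0 < max u v := lt_max_of_lt_left hu
  have hm : 0 < min u v := lt_min hu hv
  have ht : 0 < (max u v) ^ ((1:ℝ)/3) := Real.rpow_pos_of_pos hM _
  have hb₁ : c₁ * (max u v) ^ ((1:ℝ)/3) ≤ (4/3) * Real.sqrt (u ^ ((2:ℝ)/3) + v ^ ((2:ℝ)/3)) := by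
    rw [hc₁]; gcongr
  have hb₂ : (4/3) * Real.sqrt (u ^ ((2:ℝ)/3) + v ^ ((2:ℝ)/3)) ≤ c₂ * (max u v) ^ ((1:ℝ)/3) := by
    rw [hc₂, mul_assoc]; gcongr
  obtain ⟨hA1, hA2⟩ := rpow_bracket (e := α - 2) h₁ h₂ ht hb₁ hb₂
  have hexp : ((max u v) ^ ((1:ℝ)/3)) ^ (α - 2) = (max u v) ^ ((α-2)/3) := by
    rw [← Real.rpow_mul hM.le]; ring_nf
  rw [hexp] at hA1 hA2
  have hHnn : 0 ≤ Real.sqrt (u ^ (-(2:ℝ)/3) + v ^ (-(2:ℝ)/3)) := Real.sqrt_nonneg _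
  have hAnn : (0:ℝ) ≤ min (c₁ ^ (α-2)) (c₂ ^ (α-2)) * (max u v) ^ ((α-2)/3) := by positivity
  have hmnn : (0:ℝ) ≤ (min u v) ^ (-(1:ℝ)/3) := by positivity
  constructor
  · have : (α/2) * min (c₁ ^ (α-2)) (c₂ ^ (α-2)) * (16/27) *
        ((max u v) ^ ((α-2)/3) * (min u v) ^ (-(1:ℝ)/3))
        = (α/2) * (min (c₁ ^ (α-2)) (c₂ ^ (α-2)) * (max u v) ^ ((α-2)/3)) *
          ((16/27) * (min u v) ^ (-(1:ℝ)/3)) := by ring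
    rw [this, ar]
    gcongr (α/2) * ?_ * ((16/27) * ?_)
  · have : (α/2) * max (c₁ ^ (α-2)) (c₂ ^ (α-2)) * (16/27) * Real.sqrt 2 *
        ((max u v) ^ ((α-2)/3) * (min u v) ^ (-(1:ℝ)/3))
        = (α/2) * (max (c₁ ^ (α-2)) (c₂ ^ (α-2)) * (max u v) ^ ((α-2)/3)) *
          ((16/27) * (Real.sqrt 2 * (min u v) ^ (-(1:ℝ)/3))) := by ring
    rw [this, ar]
    gcongr (α/2) * ?_ * ((16/27) * ?_)

lemma shift_exp {m M a b a' : ℝ} (hm : 0 < m) (hmM : m ≤ M) (ha' : a' ≤ a) :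
    M ^ b * m ^ a ≤ M ^ (a + b - a') * m ^ a' := by
  have hM : 0 < M := lt_of_lt_of_le hm hmM
  have h1 : m ^ a = m ^ (a - a') * m ^ a' := by
    rw [← Real.rpow_add hm]; ring_nf
  have h2 : m ^ (a - a') ≤ M ^ (a - a') := Real.rpow_le_rpow hm.le hmM (by linarith)
  have h3 : M ^ (a + b - a') = M ^ b * M ^ (a - a') := by
    rw [← Real.rpow_add hM]; ring_nf
  calc M ^ b * m ^ a = M ^ b * m ^ (a - a') * m ^ a' := by rw [h1]; ring
    _ ≤ M ^ b * M ^ (a - a') * m ^ a' := by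
        gcongr
    _ = M ^ (a + b - a') * m ^ a' := by rw [h3]

lemma minmax_le_sum {u v a' b' : ℝ} (hu : 0 < u) (hv : 0 < v) :
    (max u v) ^ b' * (min u v) ^ a' ≤ u ^ a' * v ^ b' + u ^ b' * v ^ a' := by
  rcases le_total u v with h | h
  · rw [max_eq_right h, min_eq_left h, mul_comm]
    exact le_add_of_nonneg_right (by positivity)
  · rw [max_eq_left h, min_eq_right h]
    exact le_add_of_nonneg_left (by positivity)

lemma abs_rpow_integrable {c : ℝ} (hc : -1 < c) :
    IntegrableOn (fun x : ℝ => |x| ^ c) (Set.Ioo (-1:ℝ) 1) := by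
  have h01 : IntegrableOn (fun x : ℝ => x ^ c) (Set.Ioo (0:ℝ) 1) :=
    (intervalIntegral.integrableOn_Ioo_rpow_iff one_pos).2 hc
  have h1 : IntegrableOn (fun x : ℝ => |x| ^ c) (Set.Ioo (0:ℝ) 1) := by
    apply h01.congr_fun (fun x hx => by rw [abs_of_pos hx.1]) measurableSet_Ioo
  have h1' : IntervalIntegrable (fun x : ℝ => |x| ^ c) volume 0 1 := by
    rw [intervalIntegrable_iff_integrableOn_Ioo_of_le zero_le_one]; exact h1
  have h2' : IntervalIntegrable (fun x : ℝ => |x| ^ c) volume (-1) 0 := by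
    have := (IntervalIntegrable.iff_comp_neg (by simp)).mp h1'
    simp only [abs_neg, neg_zero, neg_one_mul] at this
    exact this.symm
  have := h2'.trans h1'
  rwa [intervalIntegrable_iff_integrableOn_Ioo_of_le (by norm_num : (-1:ℝ) ≤ 1)] at this

lemma prod_integrable {a' b' : ℝ} (h1 : -1 < a') (h2 : -1 < b') :
    IntegrableOn (fun x : ℝ × ℝ => |x.1| ^ a' * |x.2| ^ b')
      (Set.Ioo (-1:ℝ) 1 ×ˢ Set.Ioo (-1:ℝ) 1) := by
  rw [IntegrableOn, Measure.volume_eq_prod, ← Measure.prod_restrict]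
  exact Integrable.mul_prod (abs_rpow_integrable h1) (abs_rpow_integrable h2)

lemma meas_ar (α p : ℝ) : Measurable (fun x : ℝ × ℝ => (ar α |x.1| |x.2|) ^ p) := by
  unfold ar
  fun_prop

lemma axes_null : (volume : Measure (ℝ × ℝ)) {x : ℝ × ℝ | x.1 = 0 ∨ x.2 = 0} = 0 := by
  have h : {x : ℝ × ℝ | x.1 = 0 ∨ x.2 = 0} =
      ({0} ×ˢ (Set.univ : Set ℝ)) ∪ ((Set.univ : Set ℝ) ×ˢ {0}) := by
    ext x
    simp only [Set.mem_setOf_eq, Set.mem_union, Set.mem_prod, Set.mem_singleton_iff,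
      Set.mem_univ, and_true, true_and]
  rw [h]
  apply measure_union_null
  · rw [Measure.volume_eq_prod, Measure.prod_prod]
    simp
  · rw [Measure.volume_eq_prod, Measure.prod_prod]
    simp

lemma integrable_part (α : ℝ) (hα : 0 < α) (p : ℝ) (hp1 : 1 ≤ p) (hp3 : p < 3)
    (hp6 : p * (3 - α) < 6) :
    IntegrableOn (fun x : ℝ × ℝ => (ar α |x.1| |x.2|) ^ p)
      (Set.Ioo (-1:ℝ) 1 ×ˢ Set.Ioo (-1:ℝ) 1) := by
  obtain ⟨k, K, hk, hK, hbd⟩ := ar_bounds α hα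
  set a : ℝ := -(1:ℝ)/3 * p with ha_def
  set b : ℝ := (α-2)/3 * p with hb_def
  have hp0 : (0:ℝ) < p := lt_of_lt_of_le one_pos hp1
  have ha : -1 < a := by rw [ha_def]; nlinarith
  have hab : -1 < a + b + 1 := by
    have : a + b = p * (α - 3) / 3 := by rw [ha_def, hb_def]; ring
    nlinarith
  set t : ℝ := min a (a + b + 1) with ht_def
  have htm : -1 < t := lt_min ha hab
  set a' : ℝ := (t - 1) / 2 with ha'_def
  have ha'1 : -1 < a' := by rw [ha'_def]; linarith
  have ha't : a' < t := by rw [ha'_def]; linarith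
  have ha'a : a' ≤ a := le_trans ha't.le (min_le_left _ _)
  set b' : ℝ := a + b - a' with hb'_def
  have hb'1 : -1 < b' := by
    have := lt_of_lt_of_le ha't (min_le_right _ _)
    rw [hb'_def]; linarith
  apply Integrable.mono'
    (g := fun x : ℝ × ℝ => K ^ p * (|x.1| ^ a' * |x.2| ^ b' + |x.1| ^ b' * |x.2| ^ a'))
  · exact ((prod_integrable ha'1 hb'1).add (prod_integrable hb'1 ha'1)).const_mul _
  · exact (meas_ar α p).aestronglyMeasurable
  · have hnull : (volume.restrict (Set.Ioo (-1:ℝ) 1 ×ˢ Set.Ioo (-1:ℝ) 1))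
        {x : ℝ × ℝ | x.1 = 0 ∨ x.2 = 0} = 0 :=
      le_antisymm (le_trans (Measure.restrict_le_self _) axes_null.le) zero_le
    have hae : ∀ᵐ x ∂(volume.restrict (Set.Ioo (-1:ℝ) 1 ×ˢ Set.Ioo (-1:ℝ) 1)),
        ¬(x.1 = 0 ∨ x.2 = 0) := by
      rw [ae_iff]; simp only [not_not]; exact hnull
    filter_upwards [hae] with x hx
    push_neg at hx
    obtain ⟨hx1, hx2⟩ := hx
    set u : ℝ := |x.1| with hu_def
    set v : ℝ := |x.2| with hv_def
    have hu : 0 < u := abs_pos.2 hx1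
    have hv : 0 < v := abs_pos.2 hx2
    have hM : 0 < max u v := lt_max_of_lt_left hu
    have hm : 0 < min u v := lt_min hu hv
    obtain ⟨hlow, hup⟩ := hbd u v hu hv
    have har0 : 0 ≤ ar α u v := le_trans (by positivity) hlow
    have h1 : (ar α u v) ^ p ≤ (K * ((max u v) ^ ((α-2)/3) * (min u v) ^ (-(1:ℝ)/3))) ^ p :=
      Real.rpow_le_rpow har0 hup hp0.le
    have h2 : (K * ((max u v) ^ ((α-2)/3) * (min u v) ^ (-(1:ℝ)/3))) ^ p
        = K ^ p * ((max u v) ^ b * (min u v) ^ a) := by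
      rw [Real.mul_rpow hK.le (by positivity), Real.mul_rpow (by positivity) (by positivity),
        ← Real.rpow_mul hM.le, ← Real.rpow_mul hm.le]
    have h3 : (max u v) ^ b * (min u v) ^ a ≤ (max u v) ^ b' * (min u v) ^ a' := by
      rw [hb'_def]
      exact shift_exp hm (min_le_max) ha'a
    have h4 : (max u v) ^ b' * (min u v) ^ a' ≤ u ^ a' * v ^ b' + u ^ b' * v ^ a' :=
      minmax_le_sum hu hv
    have hnorm : ‖(ar α u v) ^ p‖ = (ar α u v) ^ p :=
      Real.norm_of_nonneg (Real.rpow_nonneg har0 p)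
    calc ‖(ar α |x.1| |x.2|) ^ p‖ = (ar α u v) ^ p := hnorm
      _ ≤ K ^ p * ((max u v) ^ b * (min u v) ^ a) := by rw [← h2]; exact h1
      _ ≤ K ^ p * (u ^ a' * v ^ b' + u ^ b' * v ^ a') := by
          apply mul_le_mul_of_nonneg_left (le_trans h3 h4) (by positivity)

lemma nonint_A (α : ℝ) (hα1 : 1 ≤ α) :
    ¬ IntegrableOn (fun x : ℝ × ℝ => (ar α |x.1| |x.2|) ^ (3:ℝ))
      (Set.Ioo (-1:ℝ) 1 ×ˢ Set.Ioo (-1:ℝ) 1) := by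
  intro h
  obtain ⟨k, K, hk, hK, hbd⟩ := ar_bounds α (by linarith)
  have hsub : Set.Ioo (0:ℝ) 1 ×ˢ Set.Ioo (0:ℝ) 1 ⊆ Set.Ioo (-1:ℝ) 1 ×ˢ Set.Ioo (-1:ℝ) 1 :=
    Set.prod_mono (Set.Ioo_subset_Ioo (by norm_num) le_rfl)
      (Set.Ioo_subset_Ioo (by norm_num) le_rfl)
  have h1 := h.mono_set hsub
  have h2 : Integrable (fun x : ℝ × ℝ => (ar α |x.1| |x.2|) ^ (3:ℝ))
      ((volume.restrict (Set.Ioo (0:ℝ) 1)).prod (volume.restrict (Set.Ioo (0:ℝ) 1))) := by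
    rw [Measure.prod_restrict, ← Measure.volume_eq_prod]; exact h1
  have h3 := h2.prod_right_ae
  have hne : (volume.restrict (Set.Ioo (0:ℝ) 1)) ≠ 0 := by
    intro h0
    rw [Measure.restrict_eq_zero, Real.volume_Ioo] at h0
    norm_num at h0
  have : (MeasureTheory.ae (volume.restrict (Set.Ioo (0:ℝ) 1))).NeBot := ae_neBot.2 hne
  obtain ⟨x₁, hx₁int, hx₁mem⟩ := (h3.and (ae_restrict_mem measurableSet_Ioo)).exists
  have h0x₁ : 0 < x₁ := hx₁mem.1
  set c : ℝ := k ^ (3:ℝ) * x₁ ^ ((α-2)/3*3) with hc_def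
  have hc : 0 < c := by positivity
  have hslice : IntegrableOn (fun x₂ : ℝ => (ar α |x₁| |x₂|) ^ (3:ℝ)) (Set.Ioo 0 x₁) :=
    IntegrableOn.mono_set hx₁int (Set.Ioo_subset_Ioo le_rfl hx₁mem.2.le)
  have hmono : IntegrableOn (fun x₂ : ℝ => c * x₂ ^ (-(1:ℝ)/3*3)) (Set.Ioo 0 x₁) := by
    apply Integrable.mono' hslice
    · exact (by fun_prop : Measurable fun x₂ : ℝ => c * x₂ ^ (-(1:ℝ)/3*3)).aestronglyMeasurable
    · filter_upwards [ae_restrict_mem measurableSet_Ioo] with y hy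
      have hy0 : 0 < y := hy.1
      have hlow := (hbd x₁ y h0x₁ hy0).1
      rw [max_eq_left hy.2.le, min_eq_right hy.2.le] at hlow
      have hEq : c * y ^ (-(1:ℝ)/3*3) = (k * (x₁ ^ ((α-2)/3) * y ^ (-(1:ℝ)/3))) ^ (3:ℝ) := by
        rw [Real.mul_rpow hk.le (by positivity), Real.mul_rpow (by positivity) (by positivity),
          ← Real.rpow_mul h0x₁.le, ← Real.rpow_mul hy0.le, hc_def]
        ring
      have hnorm : ‖c * y ^ (-(1:ℝ)/3*3)‖ = c * y ^ (-(1:ℝ)/3*3) :=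
        Real.norm_of_nonneg (by positivity)
      rw [hnorm, hEq, abs_of_pos h0x₁, abs_of_pos hy0]
      exact Real.rpow_le_rpow (by positivity) hlow (by norm_num)
  have hfin : IntegrableOn (fun x₂ : ℝ => x₂ ^ (-(1:ℝ)/3*3)) (Set.Ioo 0 x₁) := by
    have heq : (fun x₂ : ℝ => x₂ ^ (-(1:ℝ)/3*3)) =
        fun x₂ : ℝ => c⁻¹ * (c * x₂ ^ (-(1:ℝ)/3*3)) := by
      funext y; field_simp
    rw [heq]; exact hmono.const_mul _
  have := (intervalIntegral.integrableOn_Ioo_rpow_iff h0x₁).1 hfin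
  norm_num at this

lemma ar_nonneg (α u v : ℝ) (hα : 0 ≤ α) : 0 ≤ ar α u v := by
  unfold ar
  positivity

lemma nonint_B (α : ℝ) (hα : 0 < α) (hα1 : α < 1) :
    ¬ IntegrableOn (fun x : ℝ × ℝ => (ar α |x.1| |x.2|) ^ ((6:ℝ)/(3-α)))
      (Set.Ioo (-1:ℝ) 1 ×ˢ Set.Ioo (-1:ℝ) 1) := by
  intro h
  set q : ℝ := 6/(3-α) with hq_def
  have h3α : (0:ℝ) < 3 - α := by linarith
  have hq0 : 0 < q := by positivity
  set a : ℝ := -(1:ℝ)/3 * q with ha_def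
  set b : ℝ := (α-2)/3 * q with hb_def
  have haval : a = -(2/(3-α)) := by rw [ha_def, hq_def]; ring
  have ha1 : -1 < a := by
    rw [haval, neg_lt, neg_neg]
    rw [div_lt_one h3α]
    linarith
  have ha1' : 0 < a + 1 := by linarith
  have hab : a + b + 1 = -1 := by
    rw [ha_def, hb_def, hq_def]
    field_simp
    ring
  obtain ⟨k, K, hk, hK, hbd⟩ := ar_bounds α hα
  have hsub : Set.Ioo (0:ℝ) 1 ×ˢ Set.Ioo (0:ℝ) 1 ⊆ Set.Ioo (-1:ℝ) 1 ×ˢ Set.Ioo (-1:ℝ) 1 :=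
    Set.prod_mono (Set.Ioo_subset_Ioo (by norm_num) le_rfl)
      (Set.Ioo_subset_Ioo (by norm_num) le_rfl)
  have h1 := h.mono_set hsub
  have h2 : Integrable (fun x : ℝ × ℝ => (ar α |x.1| |x.2|) ^ ((6:ℝ)/(3-α)))
      ((volume.restrict (Set.Ioo (0:ℝ) 1)).prod (volume.restrict (Set.Ioo (0:ℝ) 1))) := by
    rw [Measure.prod_restrict, ← Measure.volume_eq_prod]; exact h1
  have h3 := h2.prod_right_ae
  have h4 := h2.integral_prod_left
  set c'' : ℝ := k ^ q / (a+1) with hc''_def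
  have hc'' : 0 < c'' := by positivity
  have claim : ∀ᵐ x₁ ∂(volume.restrict (Set.Ioo (0:ℝ) 1)),
      ‖c'' * x₁ ^ (-1:ℝ)‖ ≤
        ∫ y, (ar α |(x₁, y).1| |(x₁, y).2|) ^ ((6:ℝ)/(3-α)) ∂(volume.restrict (Set.Ioo (0:ℝ) 1)) := by
    filter_upwards [h3, ae_restrict_mem measurableSet_Ioo] with x₁ hx₁int hx₁mem
    have h0x₁ : 0 < x₁ := hx₁mem.1
    have hsub2 : Set.Ioo (0:ℝ) x₁ ⊆ Set.Ioo (0:ℝ) 1 := Set.Ioo_subset_Ioo le_rfl hx₁mem.2.le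
    have hFnn : ∀ y : ℝ, 0 ≤ (ar α |x₁| |y|) ^ ((6:ℝ)/(3-α)) :=
      fun y => Real.rpow_nonneg (ar_nonneg α _ _ hα.le) _
    have hminor : IntegrableOn (fun y : ℝ => (k ^ q * x₁ ^ b) * y ^ a) (Set.Ioo 0 x₁) :=
      ((intervalIntegral.integrableOn_Ioo_rpow_iff h0x₁).2 ha1).const_mul _
    have hsliceOn : IntegrableOn (fun y : ℝ => (ar α |x₁| |y|) ^ ((6:ℝ)/(3-α))) (Set.Ioo 0 x₁) :=
      IntegrableOn.mono_set hx₁int hsub2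
    have hpt : ∀ y ∈ Set.Ioo (0:ℝ) x₁,
        (k ^ q * x₁ ^ b) * y ^ a ≤ (ar α |x₁| |y|) ^ ((6:ℝ)/(3-α)) := by
      intro y hy
      have hy0 : 0 < y := hy.1
      have hlow := (hbd x₁ y h0x₁ hy0).1
      rw [max_eq_left hy.2.le, min_eq_right hy.2.le] at hlow
      have hEq : (k ^ q * x₁ ^ b) * y ^ a
          = (k * (x₁ ^ ((α-2)/3) * y ^ (-(1:ℝ)/3))) ^ q := by
        rw [Real.mul_rpow hk.le (by positivity), Real.mul_rpow (by positivity) (by positivity),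
          ← Real.rpow_mul h0x₁.le, ← Real.rpow_mul hy0.le, hb_def, ha_def]
        ring
      rw [hEq, abs_of_pos h0x₁, abs_of_pos hy0, ← hq_def]
      exact Real.rpow_le_rpow (by positivity) hlow hq0.le
    have stepD : ∫ y in Set.Ioo (0:ℝ) x₁, (k ^ q * x₁ ^ b) * y ^ a ≤
        ∫ y in Set.Ioo (0:ℝ) x₁, (ar α |x₁| |y|) ^ ((6:ℝ)/(3-α)) :=
      setIntegral_mono_on hminor hsliceOn measurableSet_Ioo hpt
    have stepA : ∫ y in Set.Ioo (0:ℝ) x₁, (ar α |x₁| |y|) ^ ((6:ℝ)/(3-α)) ≤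
        ∫ y in Set.Ioo (0:ℝ) 1, (ar α |x₁| |y|) ^ ((6:ℝ)/(3-α)) := by
      apply setIntegral_mono_set hx₁int
      · exact Filter.Eventually.of_forall (fun y => hFnn y)
      · exact HasSubset.Subset.eventuallyLE hsub2
    have stepE : ∫ y in Set.Ioo (0:ℝ) x₁, (k ^ q * x₁ ^ b) * y ^ a
        = c'' * x₁ ^ (-1:ℝ) := by
      rw [MeasureTheory.integral_const_mul]
      have hio : ∫ y in Set.Ioo (0:ℝ) x₁, y ^ a = x₁ ^ (a+1) / (a+1) := by
        rw [← MeasureTheory.integral_Ioc_eq_integral_Ioo,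
          ← intervalIntegral.integral_of_le h0x₁.le,
          integral_rpow (Or.inl ha1), Real.zero_rpow (by linarith)]
        ring
      have hx : x₁ ^ b * x₁ ^ (a+1) = x₁ ^ (-1:ℝ) := by
        rw [← Real.rpow_add h0x₁]
        congr 1
        linarith
      have hre : k ^ q * x₁ ^ b * (x₁ ^ (a+1) / (a+1))
          = (k ^ q / (a+1)) * (x₁ ^ b * x₁ ^ (a+1)) := by ring
      rw [hio, hre, hx, hc''_def]
    have hnorm : ‖c'' * x₁ ^ (-1:ℝ)‖ = c'' * x₁ ^ (-1:ℝ) :=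
      Real.norm_of_nonneg (by positivity)
    rw [hnorm]
    calc c'' * x₁ ^ (-1:ℝ) = ∫ y in Set.Ioo (0:ℝ) x₁, (k ^ q * x₁ ^ b) * y ^ a := stepE.symm
      _ ≤ ∫ y in Set.Ioo (0:ℝ) x₁, (ar α |x₁| |y|) ^ ((6:ℝ)/(3-α)) := stepD
      _ ≤ ∫ y in Set.Ioo (0:ℝ) 1, (ar α |x₁| |y|) ^ ((6:ℝ)/(3-α)) := stepA
  have hint : Integrable (fun x₁ : ℝ => c'' * x₁ ^ (-1:ℝ))
      (volume.restrict (Set.Ioo (0:ℝ) 1)) := by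
    apply Integrable.mono' h4
    · exact (by fun_prop : Measurable fun x₁ : ℝ => c'' * x₁ ^ (-1:ℝ)).aestronglyMeasurable
    · exact claim
  have hfin : IntegrableOn (fun x : ℝ => x ^ (-1:ℝ)) (Set.Ioo (0:ℝ) 1) := by
    have heq : (fun x : ℝ => x ^ (-1:ℝ)) = fun x : ℝ => c''⁻¹ * (c'' * x ^ (-1:ℝ)) := by
      funext y; field_simp
    rw [heq]; exact hint.const_mul _
  have := (intervalIntegral.integrableOn_Ioo_rpow_iff one_pos).1 hfin
  norm_num at this

/-- For the Aronsson function `w`, with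
`|D(|Dw|^α)| = (α/2)|Dw|^{α-2}|D(|Dw|²)|`,
`|Dw| = (4/3)(|x₁|^{2/3}+|x₂|^{2/3})^{1/2}` and
`|D(|Dw|²)| = (16/27)(|x₁|^{-2/3}+|x₂|^{-2/3})^{1/2}`:
letting `p_α = 3` for `α ≥ 1` and `p_α = 6/(3-α)` for `0 < α < 1`, the function
`|D(|Dw|^α)|` is in `L^p` of the unit square for all `1 ≤ p < p_α`,
but not for `p = p_α` when `α < 3`. -/
theorem stmt14 (α : ℝ) (hα : 0 < α) (pα : ℝ)
    (hpα : (1 ≤ α → pα = 3) ∧ (α < 1 → pα = 6 / (3 - α))) :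
    (∀ p : ℝ, 1 ≤ p → p < pα →
      IntegrableOn
        (fun x : ℝ × ℝ =>
          ((α / 2) * ((4 / 3) * Real.sqrt (|x.1| ^ ((2:ℝ)/3) + |x.2| ^ ((2:ℝ)/3))) ^ (α - 2)
            * ((16 / 27) * Real.sqrt (|x.1| ^ (-(2:ℝ)/3) + |x.2| ^ (-(2:ℝ)/3)))) ^ p)
        (Set.Ioo (-1 : ℝ) 1 ×ˢ Set.Ioo (-1 : ℝ) 1)) ∧
    (α < 3 →
      ¬ IntegrableOn
        (fun x : ℝ × ℝ =>
          ((α / 2) * ((4 / 3) * Real.sqrt (|x.1| ^ ((2:ℝ)/3) + |x.2| ^ ((2:ℝ)/3))) ^ (α - 2)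
            * ((16 / 27) * Real.sqrt (|x.1| ^ (-(2:ℝ)/3) + |x.2| ^ (-(2:ℝ)/3)))) ^ pα)
        (Set.Ioo (-1 : ℝ) 1 ×ˢ Set.Ioo (-1 : ℝ) 1)) := by
  constructor
  · intro p hp1 hplt
    have hp0 : 0 < p := lt_of_lt_of_le one_pos hp1
    have key : p < 3 ∧ p * (3 - α) < 6 := by
      rcases le_or_gt 1 α with hα1 | hα1
      · have h3 := hpα.1 hα1
        rw [h3] at hplt
        constructor
        · exact hplt
        · rcases le_or_gt α 3 with h | h
          · nlinarith
          · nlinarith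
      · have h6 := hpα.2 hα1
        rw [h6] at hplt
        have h3α : (0:ℝ) < 3 - α := by linarith
        have hp6 : p * (3 - α) < 6 := (lt_div_iff₀ h3α).1 hplt
        constructor
        · have : 6 / (3 - α) < 3 := (div_lt_iff₀ h3α).2 (by linarith)
          linarith
        · exact hp6
    exact integrable_part α hα p hp1 key.1 key.2
  · intro hα3
    rcases le_or_gt 1 α with hα1 | hα1
    · rw [hpα.1 hα1]
      exact nonint_A α hα1
    · rw [hpα.2 hα1]
      exact nonint_B α hα hα1
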